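/- Let (L,v) be a valued field, let v = w ∘ w̄ be a decomposition of v as a composition with a non-trivial coarsening w, and let K be a subfield of L. Then K is dense in (L,v) if and only if K is dense in (L,w). -/

import Mathlib

/-- `K` is dense in `(L,u)`: for every `a ∈ L` and every value `u c` (`c ≠ 0`)
in the value group, there is `b ∈ K` with `u (a - b) ≤ u c`. -/
def Valuation.DenseSubfield {L : Type*} [Field L] {Γ₀ : Type*}
    [LinearOrderedCommGroupWithZero Γ₀] (u : Valuation L Γ₀) (K : Subfield L) : Prop :=
  ∀ a c : L, c ≠ 0 → ∃ b ∈ K, u (a - b) ≤ u c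

/-- If `w` is a non-trivial coarsening of `v` (the valuation ring of `v` is contained
in that of `w`, so that `v = w ∘ w̄`), then a subfield `K` is dense in `(L,v)` iff it
is dense in `(L,w)`. -/
theorem denseSubfield_iff_denseSubfield_coarsening {L : Type*} [Field L]
    {Γ₀ Δ₀ : Type*} [LinearOrderedCommGroupWithZero Γ₀] [LinearOrderedCommGroupWithZero Δ₀]
    (v : Valuation L Γ₀) (w : Valuation L Δ₀)
    (hcoarse : ∀ x : L, v x ≤ 1 → w x ≤ 1)
    (hnontriv : ∃ x : L, x ≠ 0 ∧ w x ≠ 1)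
    (K : Subfield L) :
    v.DenseSubfield K ↔ w.DenseSubfield K := by
  -- a pseudouniformizer for w
  obtain ⟨x, hx0, hx1⟩ := hnontriv
  obtain ⟨π, hπ0, hπ1⟩ : ∃ π : L, π ≠ 0 ∧ w π < 1 := by
    rcases lt_or_gt_of_ne hx1 with h | h
    · exact ⟨x, hx0, h⟩
    · refine ⟨x⁻¹, inv_ne_zero hx0, ?_⟩
      rw [map_inv₀]
      exact inv_lt_one_of_one_lt₀ h
  have key : ∀ y : L, w y < 1 → v y ≤ 1 := by
    intro y hy
    by_contra h
    push_neg at h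
    have hy0 : y ≠ 0 := by
      intro h0
      rw [h0, map_zero] at h
      exact absurd h (by simp)
    have h1 : v y⁻¹ ≤ 1 := by
      rw [map_inv₀]
      exact inv_le_one_of_one_le₀ h.le
    have h2 := hcoarse _ h1
    rw [map_inv₀] at h2
    have : (1 : Δ₀) ≤ w y := by
      have hwy0 : w y ≠ 0 := (Valuation.ne_zero_iff w).2 hy0
      rw [inv_le_one₀ (zero_lt_iff.2 hwy0)] at h2
      exact h2
    exact absurd hy (not_lt.2 this)
  have mono : ∀ y c : L, c ≠ 0 → v y ≤ v c → w y ≤ w c := by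
    intro y c hc hyc
    have hvc : v c ≠ 0 := (Valuation.ne_zero_iff v).2 hc
    have hwc : w c ≠ 0 := (Valuation.ne_zero_iff w).2 hc
    have h1 : v (y / c) ≤ 1 := by
      rw [map_div₀, div_le_one₀ (zero_lt_iff.2 hvc)]
      exact hyc
    have h2 := hcoarse _ h1
    rw [map_div₀, div_le_one₀ (zero_lt_iff.2 hwc)] at h2
    exact h2
  constructor
  · intro hv a c hc
    obtain ⟨b, hbK, hb⟩ := hv a c hc
    exact ⟨b, hbK, mono _ _ hc hb⟩
  · intro hw' a c hc
    obtain ⟨b, hbK, hb⟩ := hw' a (c * π) (mul_ne_zero hc hπ0)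
    refine ⟨b, hbK, ?_⟩
    have hwc : (0 : Δ₀) < w c := zero_lt_iff.2 ((Valuation.ne_zero_iff w).2 hc)
    have hvc : (0 : Γ₀) < v c := zero_lt_iff.2 ((Valuation.ne_zero_iff v).2 hc)
    have hlt : w (a - b) < w c := by
      calc w (a - b) ≤ w (c * π) := hb
        _ = w c * w π := map_mul w _ _
        _ < w c * 1 := mul_lt_mul_of_pos_left hπ1 hwc
        _ = w c := mul_one _
    have h1 : w ((a - b) / c) < 1 := by
      rw [map_div₀, div_lt_iff₀ hwc, one_mul]
      exact hlt
    have h2 := key _ h1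
    rw [map_div₀, div_le_one₀ hvc] at h2
    exact h2
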